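/- arXiv:2210.05379 — 2 statements merged into one kernel-verified Lean document; each statement's English description precedes it below -/
import Mathlib

section
/- Let {(x^k, y^k)} be a sequence generated by the inexact penalty decomposition method, i.e., for every k one has ‖∇_x q_{τ_k}(x^{k+1}, y^{k+1})‖ ≤ δ_k and y^{k+1} ∈ Π_D(x^{k+1}), where δ_k → 0, δ_k ≥ 0, and τ_k → ∞ with τ_k > 0. If (x̄, ȳ) is an accumulation point of {(x^k, y^k)} that is feasible for the decomposed problem, i.e., G(x̄) ∈ C, x̄ = ȳ and ȳ ∈ D, then (x̄, ȳ) is an AM-stationary point of the decomposed problem: there exist subsequential sequences x^k → x̄, y^k → ȳ with y^k ∈ D, ε^k → 0 in X, z^k → 0 in Y, and multipliers λ^k ∈ Y, μ^k ∈ X such that for all k: ε^k = ∇f(x^k) + G'(x^k)*λ^k + μ^k, μ^k ∈ N_D^lim(y^k), and λ^k ∈ N_C(G(x^k) − z^k). -/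
open Filter Topology RealInnerProductSpace InnerProductSpace Asymptotics

noncomputable section

/-- The (set-valued) Euclidean projection of `x` onto `D`:
`Π_D(x) = argmin_{z ∈ D} ‖z - x‖`. -/
def projSet {E : Type*} [NormedAddCommGroup E] (D : Set E) (x : E) : Set E :=
  {z | z ∈ D ∧ ∀ w ∈ D, ‖z - x‖ ≤ ‖w - x‖}

/-- The limiting (Mordukhovich) normal cone to `D` at `x`:
`N_D^lim(x) = limsup_{v → x} cone(v - Π_D(v))`, empty outside `D`. -/
def limNormalCone {E : Type*} [NormedAddCommGroup E] [NormedSpace ℝ E]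
    (D : Set E) (x : E) : Set E :=
  {w | x ∈ D ∧ ∃ v ws : ℕ → E,
    Tendsto v atTop (𝓝 x) ∧ Tendsto ws atTop (𝓝 w) ∧
    ∀ j, ∃ t : ℝ, ∃ p, 0 ≤ t ∧ p ∈ projSet D (v j) ∧ ws j = t • (v j - p)}

/-- The normal cone (of convex analysis) to the convex set `C` at `y`, empty outside `C`. -/
def convNormalCone {E : Type*} [NormedAddCommGroup E] [InnerProductSpace ℝ E]
    (C : Set E) (y : E) : Set E :=
  {l | y ∈ C ∧ ∀ c ∈ C, ⟪l, c - y⟫ ≤ 0}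

variable {X Y : Type*} [NormedAddCommGroup X] [InnerProductSpace ℝ X] [FiniteDimensional ℝ X]
  [NormedAddCommGroup Y] [InnerProductSpace ℝ Y] [FiniteDimensional ℝ Y]

/-- The partial penalty function
`q_τ(x,y) = f(x) + (τ/2) (‖x-y‖² + dist_C(G(x))²)`, where `dist_C(w) = ‖w - P_C(w)‖`
and `PC` denotes the Euclidean projection onto `C`. -/
def qpen (f : X → ℝ) (G : X → Y) (PC : Y → Y) (τ : ℝ) (x y : X) : ℝ :=
  f x + τ / 2 * (‖x - y‖ ^ 2 + ‖G x - PC (G x)‖ ^ 2)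

/-- The gradient `∇_x q_τ(x, y)` of the penalty function w.r.t. the first block. -/
def gradqx (f : X → ℝ) (G : X → Y) (PC : Y → Y) (τ : ℝ) (x y : X) : X :=
  gradient (fun u => qpen f G PC τ u y) x

section aux
variable {E : Type*} [NormedAddCommGroup E] [InnerProductSpace ℝ E] [CompleteSpace E]

lemma hasGradientAt_of_sq_bound (g : E → ℝ) (a x : E) (K : ℝ)
    (h : ∀ v, |g (x + v) - g x - ⟪a, v⟫| ≤ K * ‖v‖ ^ 2) :
    HasGradientAt g a x := by
  rw [hasGradientAt_iff_isLittleO_nhds_zero]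
  have h1 : (fun v => g (x + v) - g x - ⟪a, v⟫) =O[𝓝 (0:E)] fun v => ‖v‖ ^ 2 := by
    apply IsBigO.of_bound K
    filter_upwards with v
    simpa [Real.norm_eq_abs, abs_of_nonneg (by positivity : (0:ℝ) ≤ ‖v‖ ^ 2)] using h v
  have h2 : (fun v : E => ‖v‖ ^ 2) =o[𝓝 (0:E)] fun v => v := by
    rw [isLittleO_iff]
    intro c hc
    filter_upwards [Metric.ball_mem_nhds (0:E) hc] with v hv
    simp only [Metric.mem_ball, dist_zero_right] at hv
    have : ‖v‖ ^ 2 = ‖v‖ * ‖v‖ := sq ‖v‖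
    rw [Real.norm_eq_abs, abs_of_nonneg (by positivity : (0:ℝ) ≤ ‖v‖ ^ 2), this]
    exact mul_le_mul_of_nonneg_right hv.le (norm_nonneg v)
  exact h1.trans_isLittleO h2

variable {C : Set E} {P : E → E}

lemma proj_inner_le (hCconv : Convex ℝ C)
    (hP : ∀ w, P w ∈ C ∧ ∀ c ∈ C, ‖P w - w‖ ≤ ‖c - w‖) (w : E) {c : E} (hc : c ∈ C) :
    ⟪w - P w, c - P w⟫ ≤ 0 := by
  set p := P w with hp
  set I : ℝ := ⟪w - p, c - p⟫ with hI
  set N : ℝ := ‖c - p‖ ^ 2 with hN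
  have key : ∀ t : ℝ, 0 < t → t ≤ 1 → 2 * I ≤ t * N := by
    intro t ht ht1
    have hmem : p + t • (c - p) ∈ C := by
      have := hCconv (hP w).1 hc (by linarith : (0:ℝ) ≤ 1 - t) ht.le (by ring)
      convert this using 1
      rw [smul_sub, sub_smul, one_smul]
      abel
    have hle := (hP w).2 _ hmem
    have hsq : ‖p - w‖ ^ 2 ≤ ‖p + t • (c - p) - w‖ ^ 2 := by
      have h0 := norm_nonneg (p - w)
      nlinarith [hle]
    have hexp : ‖p + t • (c - p) - w‖ ^ 2
        = ‖p - w‖ ^ 2 + 2 * t * ⟪p - w, c - p⟫ + t ^ 2 * N := by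
      have : p + t • (c - p) - w = (p - w) + t • (c - p) := by abel
      rw [this, norm_add_sq_real, real_inner_smul_right, norm_smul]
      rw [Real.norm_eq_abs, hN, mul_pow, sq_abs]
      ring
    have hflip : ⟪p - w, c - p⟫ = -I := by
      rw [hI, ← inner_neg_left, neg_sub]
    rw [hexp, hflip] at hsq
    have hN0 : (0:ℝ) ≤ N := by positivity
    have h2I : 0 ≤ -2 * t * I + t ^ 2 * N := by linarith
    exact (mul_le_mul_iff_right₀ ht).mp (by nlinarith : t * (2 * I) ≤ t * (t * N))
  by_contra hlt
  push_neg at hlt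
  have hN0 : (0:ℝ) ≤ N := by positivity
  rcases eq_or_lt_of_le hN0 with hN0' | hNpos
  · have := key 1 one_pos le_rfl
    rw [← hN0'] at this
    linarith
  · set t := min 1 (I / N) with htdef
    have htpos : 0 < t := lt_min one_pos (div_pos hlt hNpos)
    have ht1 : t ≤ 1 := min_le_left _ _
    have := key t htpos ht1
    have htN : t * N ≤ I := by
      calc t * N ≤ (I / N) * N := by
            apply mul_le_mul_of_nonneg_right (min_le_right _ _) hN0
        _ = I := by field_simp
    linarith

lemma proj_lipschitz (hCconv : Convex ℝ C)
    (hP : ∀ w, P w ∈ C ∧ ∀ c ∈ C, ‖P w - w‖ ≤ ‖c - w‖) (w₁ w₂ : E) :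
    ‖P w₁ - P w₂‖ ≤ ‖w₁ - w₂‖ := by
  have h1 := proj_inner_le hCconv hP w₁ (hP w₂).1
  have h2 := proj_inner_le hCconv hP w₂ (hP w₁).1
  have hkey : ‖P w₁ - P w₂‖ ^ 2 ≤ ⟪w₁ - w₂, P w₁ - P w₂⟫ := by
    have e1 : ⟪w₂ - P w₂, P w₁ - P w₂⟫ ≤ 0 := h2
    have e2 : ⟪w₁ - P w₁, P w₂ - P w₁⟫ ≤ 0 := h1
    have e2' : 0 ≤ ⟪w₁ - P w₁, P w₁ - P w₂⟫ := by
      rw [← neg_nonpos, ← inner_neg_right, neg_sub]; exact e2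
    have expand : ⟪w₁ - w₂, P w₁ - P w₂⟫
        = ⟪w₁ - P w₁, P w₁ - P w₂⟫ - ⟪w₂ - P w₂, P w₁ - P w₂⟫
          + ⟪P w₁ - P w₂, P w₁ - P w₂⟫ := by
      rw [← inner_sub_left, ← inner_add_left]
      congr 1
      abel
    rw [expand, real_inner_self_eq_norm_sq]
    linarith
  have := real_inner_le_norm (w₁ - w₂) (P w₁ - P w₂)
  nlinarith [norm_nonneg (P w₁ - P w₂), norm_nonneg (w₁ - w₂)]

lemma hasGradientAt_distsq (hCconv : Convex ℝ C)
    (hP : ∀ w, P w ∈ C ∧ ∀ c ∈ C, ‖P w - w‖ ≤ ‖c - w‖) (w : E) :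
    HasGradientAt (fun v => ‖v - P v‖ ^ 2) ((2:ℝ) • (w - P w)) w := by
  apply hasGradientAt_of_sq_bound _ _ _ 5
  intro v
  set a := w - P w with ha
  have hinn : ⟪(2:ℝ) • a, v⟫ = 2 * ⟪a, v⟫ := real_inner_smul_left a v 2
  set d2 := ‖w + v - P (w + v)‖ ^ 2 with hd2
  -- upper bound
  have hup : d2 ≤ ‖a‖ ^ 2 + 2 * ⟪a, v⟫ + ‖v‖ ^ 2 := by
    have hle := (hP (w + v)).2 (P w) (hP w).1
    rw [norm_sub_rev, norm_sub_rev (P w)] at hle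
    have : ‖w + v - P w‖ ^ 2 = ‖a‖ ^ 2 + 2 * ⟪a, v⟫ + ‖v‖ ^ 2 := by
      have e : w + v - P w = a + v := by rw [ha]; abel
      rw [e, norm_add_sq_real]
    rw [← this, hd2]
    nlinarith [hle, norm_nonneg (w + v - P (w + v)), norm_nonneg (w + v - P w)]
  -- lower bound
  have hlow : ‖a‖ ^ 2 ≤ d2 - 2 * ⟪w + v - P (w + v), v⟫ + ‖v‖ ^ 2 := by
    have hle := (hP w).2 (P (w + v)) (hP (w + v)).1
    rw [norm_sub_rev, norm_sub_rev (P (w+v))] at hle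
    have e : w - P (w + v) = (w + v - P (w + v)) - v := by abel
    have : ‖w - P (w + v)‖ ^ 2
        = d2 - 2 * ⟪w + v - P (w + v), v⟫ + ‖v‖ ^ 2 := by
      rw [e, norm_sub_sq_real, hd2]
    rw [← this]
    rw [← ha] at hle
    nlinarith [hle, norm_nonneg (w - P (w + v)), norm_nonneg a]
  have hcross : |⟪w + v - P (w + v), v⟫ - ⟪a, v⟫| ≤ 2 * ‖v‖ ^ 2 := by
    have e : (w + v - P (w + v)) - a = v + (P w - P (w + v)) := by rw [ha]; abel
    have : ⟪w + v - P (w + v), v⟫ - ⟪a, v⟫ = ⟪v + (P w - P (w + v)), v⟫ := by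
      rw [← inner_sub_left, e]
    rw [this]
    have hb := abs_real_inner_le_norm (v + (P w - P (w + v))) v
    have hlip : ‖P w - P (w + v)‖ ≤ ‖v‖ := by
      have := proj_lipschitz hCconv hP w (w + v)
      simpa [norm_sub_rev] using this
    have htri : ‖v + (P w - P (w + v))‖ ≤ 2 * ‖v‖ := by
      calc ‖v + (P w - P (w + v))‖ ≤ ‖v‖ + ‖P w - P (w + v)‖ := norm_add_le _ _
        _ ≤ 2 * ‖v‖ := by linarith
    calc |⟪v + (P w - P (w + v)), v⟫| ≤ ‖v + (P w - P (w + v))‖ * ‖v‖ := hb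
      _ ≤ 2 * ‖v‖ * ‖v‖ := by
          apply mul_le_mul_of_nonneg_right htri (norm_nonneg v)
      _ = 2 * ‖v‖ ^ 2 := by ring
  rw [hinn]
  rw [abs_le] at hcross ⊢
  constructor
  · nlinarith [hlow, hcross.1]
  · nlinarith [hup]

end aux

lemma gradqx_eq (f : X → ℝ) (G : X → Y) (C : Set Y) (PC : Y → Y) (hCconv : Convex ℝ C)
    (hPC : ∀ w, PC w ∈ C ∧ ∀ c ∈ C, ‖PC w - w‖ ≤ ‖c - w‖)
    (hf : ContDiff ℝ 1 f) (hG : ContDiff ℝ 1 G) (τ : ℝ) (x y : X) :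
    gradqx f G PC τ x y = gradient f x
      + ContinuousLinearMap.adjoint (fderiv ℝ G x) (τ • (G x - PC (G x)))
      + τ • (x - y) := by
  have hfd : DifferentiableAt ℝ f x := (hf.differentiable one_ne_zero).differentiableAt
  have h2 : HasGradientAt (fun u : X => ‖u - y‖ ^ 2) ((2:ℝ) • (x - y)) x := by
    apply hasGradientAt_of_sq_bound _ _ _ 1
    intro v
    have heq : ‖x + v - y‖ ^ 2 - ‖x - y‖ ^ 2 - ⟪(2:ℝ) • (x - y), v⟫ = ‖v‖ ^ 2 := by
      have e : x + v - y = (x - y) + v := by abel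
      rw [real_inner_smul_left, e, norm_add_sq_real]; ring
    rw [heq, abs_of_nonneg (by positivity : (0:ℝ) ≤ ‖v‖ ^ 2), one_mul]
  have h3 := hasGradientAt_distsq hCconv hPC (G x)
  have h4 : HasFDerivAt G (fderiv ℝ G x) x :=
    (hG.differentiable one_ne_zero).differentiableAt.hasFDerivAt
  have h5 : HasFDerivAt (fun u : X => ‖G u - PC (G u)‖ ^ 2)
      ((toDual ℝ Y ((2:ℝ) • (G x - PC (G x)))).comp (fderiv ℝ G x)) x :=
    h3.hasFDerivAt.comp x h4
  have hsum := (h2.hasFDerivAt.add h5).const_mul (τ / 2)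
  have hq : HasFDerivAt (fun u => qpen f G PC τ u y)
      (fderiv ℝ f x + (τ / 2) • ((toDual ℝ X ((2:ℝ) • (x - y)))
        + (toDual ℝ Y ((2:ℝ) • (G x - PC (G x)))).comp (fderiv ℝ G x))) x := by
    simp only [qpen]
    exact hfd.hasFDerivAt.add hsum
  have hfg' : (toDual ℝ X) (gradient f x) = fderiv ℝ f x := by
    rw [gradient]; exact (toDual ℝ X).apply_symm_apply _
  have key : (fderiv ℝ f x + (τ / 2) • ((toDual ℝ X ((2:ℝ) • (x - y)))
        + (toDual ℝ Y ((2:ℝ) • (G x - PC (G x)))).comp (fderiv ℝ G x)))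
      = toDual ℝ X (gradient f x
        + ContinuousLinearMap.adjoint (fderiv ℝ G x) (τ • (G x - PC (G x)))
        + τ • (x - y)) := by
    apply ContinuousLinearMap.ext; intro v
    rw [← hfg']
    simp only [ContinuousLinearMap.add_apply, ContinuousLinearMap.coe_smul', Pi.smul_apply,
      ContinuousLinearMap.comp_apply, toDual_apply_apply, inner_add_left, real_inner_smul_left,
      ContinuousLinearMap.adjoint_inner_left, smul_eq_mul]
    ring
  have hgr : HasGradientAt (fun u => qpen f G PC τ u y)
      (gradient f x
        + ContinuousLinearMap.adjoint (fderiv ℝ G x) (τ • (G x - PC (G x)))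
        + τ • (x - y)) x := by
    rw [hasGradientAt_iff_hasFDerivAt, ← key]
    exact hq
  exact hgr.gradient

/-- a feasible accumulation point of the inexact penalty decomposition method
is an AM-stationary point of the decomposed problem
`min f(x)  s.t.  x - y = 0, G(x) ∈ C, y ∈ D`. -/
theorem pd_feasible_accumulation_point_is_AM_stationary
    (f : X → ℝ) (G : X → Y) (C : Set Y) (D : Set X)
    (hf : ContDiff ℝ 1 f) (hG : ContDiff ℝ 1 G)
    (hCne : C.Nonempty) (hCcl : IsClosed C) (hCconv : Convex ℝ C)
    (hDne : D.Nonempty) (hDcl : IsClosed D)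
    (PC : Y → Y) (hPC : ∀ w, PC w ∈ C ∧ ∀ c ∈ C, ‖PC w - w‖ ≤ ‖c - w‖)
    (δ τs : ℕ → ℝ) (hδnn : ∀ k, 0 ≤ δ k) (hδ0 : Tendsto δ atTop (𝓝 0))
    (hτpos : ∀ k, 0 < τs k) (hτ : Tendsto τs atTop atTop)
    (x y : ℕ → X)
    (halg : ∀ k, ‖gradqx f G PC (τs k) (x (k + 1)) (y (k + 1))‖ ≤ δ k ∧
      y (k + 1) ∈ projSet D (x (k + 1)))
    (xb yb : X) (φ : ℕ → ℕ) (hφ : StrictMono φ)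
    (hxb : Tendsto (fun j => x (φ j)) atTop (𝓝 xb))
    (hyb : Tendsto (fun j => y (φ j)) atTop (𝓝 yb))
    (hfeas : G xb ∈ C ∧ xb = yb ∧ yb ∈ D) :
    ∃ (xs ys εs : ℕ → X) (zs lam : ℕ → Y) (mu : ℕ → X),
      Tendsto xs atTop (𝓝 xb) ∧ Tendsto ys atTop (𝓝 yb) ∧ (∀ k, ys k ∈ D) ∧
      Tendsto εs atTop (𝓝 0) ∧ Tendsto zs atTop (𝓝 0) ∧
      ∀ k, εs k = gradient f (xs k) +
            ContinuousLinearMap.adjoint (fderiv ℝ G (xs k)) (lam k) + mu k ∧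
        mu k ∈ limNormalCone D (ys k) ∧
        lam k ∈ convNormalCone C (G (xs k) - zs k) := by
  -- index bookkeeping
  set ψ : ℕ → ℕ := fun j => φ (j + 1) - 1 with hψ
  have hψ1 : ∀ j, ψ j + 1 = φ (j + 1) := by
    intro j
    have : j + 1 ≤ φ (j + 1) := hφ.le_apply
    simp only [hψ]
    omega
  have hψtop : Tendsto ψ atTop atTop := by
    apply tendsto_atTop_mono (fun j => ?_) tendsto_id
    have : j + 1 ≤ φ (j + 1) := hφ.le_apply
    simp only [hψ, id_eq]
    omega
  set xs : ℕ → X := fun j => x (φ (j + 1)) with hxs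
  set ys : ℕ → X := fun j => y (φ (j + 1)) with hys
  set zs : ℕ → Y := fun j => G (xs j) - PC (G (xs j)) with hzs
  set lam : ℕ → Y := fun j => τs (ψ j) • zs j with hlam
  set mu : ℕ → X := fun j => τs (ψ j) • (xs j - ys j) with hmu
  set εs : ℕ → X := fun j => gradqx f G PC (τs (ψ j)) (xs j) (ys j) with hεs
  have halg' : ∀ j, ‖εs j‖ ≤ δ (ψ j) ∧ ys j ∈ projSet D (xs j) := by
    intro j
    have h := halg (ψ j)
    rw [hψ1 j] at h
    exact h
  have hxsl : Tendsto xs atTop (𝓝 xb) := hxb.comp (tendsto_add_atTop_nat 1)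
  have hysl : Tendsto ys atTop (𝓝 yb) := hyb.comp (tendsto_add_atTop_nat 1)
  refine ⟨xs, ys, εs, zs, lam, mu, hxsl, hysl, fun j => (halg' j).2.1, ?_, ?_, ?_⟩
  · -- εs → 0
    exact squeeze_zero_norm (fun j => (halg' j).1) (hδ0.comp hψtop)
  · -- zs → 0
    refine squeeze_zero_norm (a := fun j => ‖G xb - G (xs j)‖) (fun j => ?_) ?_
    · have := (hPC (G (xs j))).2 (G xb) hfeas.1
      simpa [hzs, norm_sub_rev] using this
    · have : Tendsto (fun j => G xb - G (xs j)) atTop (𝓝 (G xb - G xb)) :=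
        tendsto_const_nhds.sub ((hG.continuous.tendsto xb).comp hxsl)
      simpa using this.norm
  · intro j
    have hproj := (halg' j).2
    have hτj := hτpos (ψ j)
    refine ⟨?_, ?_, ?_⟩
    · -- the equation
      have := gradqx_eq f G C PC hCconv hPC hf hG (τs (ψ j)) (xs j) (ys j)
      rw [hεs]
      simp only [this, hlam, hmu, hzs]
    · -- mu j ∈ limNormalCone D (ys j)
      set d : X := xs j - ys j with hd
      refine ⟨hproj.1, fun i => ys j + (1 / ((i : ℝ) + 1)) • d, fun _ => mu j, ?_, tendsto_const_nhds, ?_⟩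
      · have h0 : Tendsto (fun i : ℕ => (1 / ((i : ℝ) + 1)) • d) atTop (𝓝 ((0:ℝ) • d)) :=
          (tendsto_one_div_add_atTop_nhds_zero_nat).smul_const d
        simpa using tendsto_const_nhds.add h0
      · intro i
        have hipos : (0:ℝ) < (i : ℝ) + 1 := by positivity
        refine ⟨τs (ψ j) * ((i : ℝ) + 1), ys j, by positivity, ⟨hproj.1, ?_⟩, ?_⟩
        · intro w hw
          have hbase : ‖ys j - xs j‖ ≤ ‖w - xs j‖ := hproj.2 w hw
          have e1 : ys j - (ys j + (1 / ((i : ℝ) + 1)) • d) = -((1 / ((i : ℝ) + 1)) • d) := by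
            abel
          have e2 : xs j - (ys j + (1 / ((i : ℝ) + 1)) • d) = (1 - 1 / ((i : ℝ) + 1)) • d := by
            rw [sub_smul, one_smul, hd]; abel
          have hfrac0 : (0:ℝ) ≤ 1 / ((i : ℝ) + 1) := by positivity
          have hfrac1 : 1 / ((i : ℝ) + 1) ≤ 1 := by
            rw [div_le_one hipos]; linarith
          have n1 : ‖ys j - (ys j + (1 / ((i : ℝ) + 1)) • d)‖ = (1 / ((i : ℝ) + 1)) * ‖d‖ := by
            rw [e1, norm_neg, norm_smul, Real.norm_eq_abs, abs_of_nonneg hfrac0]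
          have n2 : ‖xs j - (ys j + (1 / ((i : ℝ) + 1)) • d)‖ = (1 - 1 / ((i : ℝ) + 1)) * ‖d‖ := by
            rw [e2, norm_smul, Real.norm_eq_abs, abs_of_nonneg (by linarith)]
          have hdn : ‖ys j - xs j‖ = ‖d‖ := by rw [hd, norm_sub_rev]
          have htri : ‖w - xs j‖ ≤ ‖w - (ys j + (1 / ((i : ℝ) + 1)) • d)‖
              + ‖xs j - (ys j + (1 / ((i : ℝ) + 1)) • d)‖ := by
            have := norm_sub_le_norm_sub_add_norm_sub w (ys j + (1 / ((i : ℝ) + 1)) • d) (xs j)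
            linarith [this, norm_sub_rev (ys j + (1 / ((i : ℝ) + 1)) • d) (xs j)]
          rw [hdn] at hbase
          rw [n1]
          linarith [n2, htri, hbase]
        · have e3 : ys j + (1 / ((i : ℝ) + 1)) • d - ys j = (1 / ((i : ℝ) + 1)) • d := by abel
          rw [e3, smul_smul, hmu]
          congr 1
          field_simp
          rfl
    · -- lam j ∈ convNormalCone C (G (xs j) - zs j)
      have hPCeq : G (xs j) - zs j = PC (G (xs j)) := sub_sub_cancel _ _
      rw [hPCeq]
      refine ⟨(hPC (G (xs j))).1, fun c hc => ?_⟩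
      have hq := proj_inner_le hCconv hPC (G (xs j)) hc
      rw [hlam, real_inner_smul_left, hzs]
      exact mul_nonpos_of_nonneg_of_nonpos hτj.le hq
end
end

section
/- Fix τ > 0 and δ > 0, constants γ ∈ (0,1), β ∈ (0,1), and a starting point (u⁰, v⁰) ∈ X × D. Assume f has bounded level sets, and consider the inexact alternating minimization iteration: as long as ‖∇_x q_τ(u^ℓ, v^ℓ)‖ > δ, choose a positive definite self-adjoint linear map H_ℓ on X satisfying c₁‖z‖² ≤ ⟨z, H_ℓ z⟩ ≤ c₂‖z‖² for all z ∈ X (with fixed constants 0 < c₁ ≤ c₂ independent of ℓ), set d^ℓ = −H_ℓ(∇_x q_τ(u^ℓ, v^ℓ)), compute the Armijo step size α_ℓ = max{β^j : j ∈ ℕ, q_τ(u^ℓ + β^j d^ℓ, v^ℓ) ≤ q_τ(u^ℓ, v^ℓ) + γ β^j ⟨∇_x q_τ(u^ℓ, v^ℓ), d^ℓ⟩}, set u^{ℓ+1} = u^ℓ + α_ℓ d^ℓ, and choose v^{ℓ+1} ∈ Π_D(u^{ℓ+1}). Then this iteration cannot continue indefinitely: there exists a finite index ℓ with ‖∇_x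 q_τ(u^ℓ, v^ℓ)‖ ≤ δ; in particular the iteration produces a pair (x⁺, y⁺) with ‖∇_x q_τ(x⁺, y⁺)‖ ≤ δ and y⁺ ∈ argmin_{y ∈ D} q_τ(x⁺, y). -/
open Filter Topology RealInnerProductSpace

noncomputable section

variable {X Y : Type*} [NormedAddCommGroup X] [InnerProductSpace ℝ X] [FiniteDimensional ℝ X]
  [NormedAddCommGroup Y] [InnerProductSpace ℝ Y] [FiniteDimensional ℝ Y]

/-- The Armijo acceptability condition for a step size `a` along direction `d` at `(u,v)`. -/
def armijoCond (f : X → ℝ) (G : X → Y) (PC : Y → Y) (τ γ : ℝ) (u v d : X) (a : ℝ) : Prop :=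
  qpen f G PC τ (u + a • d) v ≤ qpen f G PC τ u v + γ * a * ⟪gradqx f G PC τ u v, d⟫

section helpers
variable {Y : Type*} [NormedAddCommGroup Y] [InnerProductSpace ℝ Y] [FiniteDimensional ℝ Y]

section proj
variable {C : Set Y} {PC : Y → Y}

/-- variational inequality for the projection -/
lemma proj_var_ineq (hCne : C.Nonempty) (hCconv : Convex ℝ C)
    (hPC : ∀ w, PC w ∈ C ∧ ∀ c ∈ C, ‖PC w - w‖ ≤ ‖c - w‖) (w : Y) :
    ∀ c ∈ C, ⟪w - PC w, c - PC w⟫ ≤ 0 := by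
  haveI : Nonempty C := hCne.to_subtype
  have h1 : ‖w - PC w‖ = ⨅ c : C, ‖w - c‖ := by
    apply le_antisymm
    · apply le_ciInf
      intro c
      rw [norm_sub_rev w (PC w), norm_sub_rev w c]
      exact (hPC w).2 c c.2
    · exact ciInf_le ⟨0, fun r hr => by
        obtain ⟨c, hc⟩ := Set.mem_range.1 hr
        exact hc ▸ norm_nonneg _⟩ (⟨PC w, (hPC w).1⟩ : C)
  exact (norm_eq_iInf_iff_real_inner_le_zero hCconv (hPC w).1).1 h1

/-- the projection is nonexpansive -/
lemma proj_nonexp (hCne : C.Nonempty) (hCconv : Convex ℝ C)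
    (hPC : ∀ w, PC w ∈ C ∧ ∀ c ∈ C, ‖PC w - w‖ ≤ ‖c - w‖) (w w' : Y) :
    ‖PC w - PC w'‖ ≤ ‖w - w'‖ := by
  have h1 := proj_var_ineq hCne hCconv hPC w (PC w') (hPC w').1
  have h2 := proj_var_ineq hCne hCconv hPC w' (PC w) (hPC w).1
  have key : ‖PC w - PC w'‖ ^ 2 ≤ ⟪w - w', PC w - PC w'⟫ := by
    have e1 : ⟪w - PC w, PC w' - PC w⟫ + ⟪w' - PC w', PC w - PC w'⟫ ≤ 0 :=
      add_nonpos h1 h2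
    have : ⟪w - w', PC w - PC w'⟫ - ‖PC w - PC w'‖ ^ 2 =
        -(⟪w - PC w, PC w' - PC w⟫ + ⟪w' - PC w', PC w - PC w'⟫) := by
      rw [← real_inner_self_eq_norm_sq]
      simp only [inner_sub_left, inner_sub_right]
      ring
    nlinarith [this]
  rcases le_or_gt ‖PC w - PC w'‖ 0 with h | h
  · exact h.trans (norm_nonneg _)
  · have hcs : ⟪w - w', PC w - PC w'⟫ ≤ ‖w - w'‖ * ‖PC w - PC w'‖ :=
      real_inner_le_norm _ _
    nlinarith

/-- squared distance to C (written via PC) is differentiable with derivative 2⟪w - PC w, ·⟫ -/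
lemma hasFDerivAt_distsq (hCne : C.Nonempty) (hCconv : Convex ℝ C)
    (hPC : ∀ w, PC w ∈ C ∧ ∀ c ∈ C, ‖PC w - w‖ ≤ ‖c - w‖) (w : Y) :
    HasFDerivAt (fun z => ‖z - PC z‖ ^ 2) ((2:ℝ) • (innerSL ℝ (w - PC w))) w := by
  rw [hasFDerivAt_iff_isLittleO_nhds_zero]
  have key : ∀ h : Y, |‖w + h - PC (w + h)‖ ^ 2 - ‖w - PC w‖ ^ 2
      - ((2:ℝ) • (innerSL ℝ (w - PC w))) h| ≤ ‖h‖ ^ 2 := by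
    intro h
    have hup : ‖w + h - PC (w + h)‖ ^ 2 ≤ ‖w - PC w‖ ^ 2 + 2 * ⟪w - PC w, h⟫ + ‖h‖ ^ 2 := by
      have h1 : ‖PC (w+h) - (w+h)‖ ≤ ‖PC w - (w+h)‖ := (hPC (w+h)).2 _ (hPC w).1
      have h2 : ‖w + h - PC (w+h)‖ ≤ ‖w + h - PC w‖ := by
        rwa [norm_sub_rev (w+h) (PC (w+h)), norm_sub_rev (w+h) (PC w)]
      have h3 : ‖w + h - PC w‖ ^ 2 = ‖w - PC w‖ ^ 2 + 2 * ⟪w - PC w, h⟫ + ‖h‖ ^ 2 := by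
        have : w + h - PC w = (w - PC w) + h := by abel
        rw [this, ← real_inner_self_eq_norm_sq, ← real_inner_self_eq_norm_sq,
          ← real_inner_self_eq_norm_sq]
        simp only [inner_add_left, inner_add_right, real_inner_comm (w - PC w) h]
        ring
      nlinarith [norm_nonneg (w + h - PC (w+h)), norm_nonneg (w + h - PC w)]
    have hlow : ‖w - PC w‖ ^ 2 + 2 * ⟪w - PC w, h⟫ - ‖h‖ ^ 2 ≤ ‖w + h - PC (w + h)‖ ^ 2 := by
      have h1 : ‖PC w - w‖ ≤ ‖PC (w+h) - w‖ := (hPC w).2 _ (hPC (w+h)).1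
      have h2 : ‖w - PC w‖ ≤ ‖w - PC (w+h)‖ := by
        rwa [norm_sub_rev w (PC w), norm_sub_rev w (PC (w+h))]
      have h3 : ‖w - PC (w+h)‖ ^ 2 = ‖w + h - PC (w+h)‖ ^ 2
          - 2 * ⟪w + h - PC (w+h), h⟫ + ‖h‖ ^ 2 := by
        have : w - PC (w+h) = (w + h - PC (w+h)) - h := by abel
        rw [this, ← real_inner_self_eq_norm_sq, ← real_inner_self_eq_norm_sq,
          ← real_inner_self_eq_norm_sq]
        simp only [inner_sub_left, inner_sub_right, inner_add_left, inner_add_right,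
          real_inner_comm h (w+h), real_inner_comm h (PC (w+h))]
        ring
      have h4 : ⟪w + h - PC (w+h), h⟫ ≥ ⟪w - PC w, h⟫ := by
        have e : ⟪w + h - PC (w+h), h⟫ - ⟪w - PC w, h⟫ = ‖h‖^2 + ⟪PC w - PC (w+h), h⟫ := by
          rw [← real_inner_self_eq_norm_sq]
          have : (w + h - PC (w+h)) - (w - PC w) = h + (PC w - PC (w+h)) := by abel
          rw [← inner_sub_left, this, inner_add_left]
        have cs : ⟪PC w - PC (w+h), h⟫ ≥ -(‖PC w - PC (w+h)‖ * ‖h‖) := by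
          have := abs_real_inner_le_norm (PC w - PC (w+h)) h
          cases abs_le.1 this with
          | intro a b => linarith
        have ne : ‖PC w - PC (w+h)‖ ≤ ‖h‖ := by
          have := proj_nonexp hCne hCconv hPC w (w+h)
          simpa using this
        nlinarith [norm_nonneg h, mul_le_mul_of_nonneg_right ne (norm_nonneg h)]
      nlinarith [norm_nonneg (w - PC (w+h)), norm_nonneg (w - PC w)]
    have : ((2:ℝ) • (innerSL ℝ (w - PC w))) h = 2 * ⟪w - PC w, h⟫ := by
      simp only [ContinuousLinearMap.coe_smul', Pi.smul_apply, innerSL_apply_apply,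
        innerSL_apply_apply, smul_eq_mul, inner_sub_left]
    rw [this, abs_le]
    constructor <;> linarith
  have hbig : (fun h : Y => ‖w + h - PC (w + h)‖ ^ 2 - ‖w - PC w‖ ^ 2
      - ((2:ℝ) • (innerSL ℝ (w - PC w))) h) =O[𝓝 0] (fun h : Y => ‖h‖ ^ 2) := by
    apply Asymptotics.IsBigO.of_bound 1
    filter_upwards with h
    simpa using key h
  apply hbig.trans_isLittleO
  have : (fun h : Y => ‖h‖ ^ 2) =o[𝓝 0] (fun h : Y => h) := by
    rw [Asymptotics.isLittleO_iff]
    intro c hc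
    filter_upwards [Metric.ball_mem_nhds (0:Y) hc] with h hh
    have : ‖h‖ < c := by simpa using hh
    simp only [norm_pow, norm_norm]
    nlinarith [norm_nonneg h]
  exact this

end proj

/-- the explicit formula for the gradient of qpen in x -/
def gmap (f : X → ℝ) (G : X → Y) (PC : Y → Y) (τ : ℝ) (x y : X) : X :=
  gradient f x + τ • (x - y) +
    τ • ((fderiv ℝ G x).adjoint (G x - PC (G x)))

lemma hasGradientAt_qpen {f : X → ℝ} {G : X → Y} {C : Set Y} {PC : Y → Y}
    (hf : ContDiff ℝ 1 f) (hG : ContDiff ℝ 1 G)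
    (hCne : C.Nonempty) (hCconv : Convex ℝ C)
    (hPC : ∀ w, PC w ∈ C ∧ ∀ c ∈ C, ‖PC w - w‖ ≤ ‖c - w‖) (τ : ℝ) (x y : X) :
    HasGradientAt (fun z => qpen f G PC τ z y) (gmap f G PC τ x y) x := by
  have hfd : HasFDerivAt f (fderiv ℝ f x) x :=
    (hf.differentiable one_ne_zero).differentiableAt.hasFDerivAt
  have hGd : HasFDerivAt G (fderiv ℝ G x) x :=
    (hG.differentiable one_ne_zero).differentiableAt.hasFDerivAt
  -- ‖x - y‖ ^ 2 part
  have hsq : HasFDerivAt (fun z : X => ‖z - y‖ ^ 2) ((2:ℝ) • (innerSL ℝ (x - y))) x := by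
    have hPCy : ∀ w : X, (fun _ : X => y) w ∈ ({y} : Set X) ∧
        ∀ c ∈ ({y} : Set X), ‖(fun _ : X => y) w - w‖ ≤ ‖c - w‖ := by
      intro w
      refine ⟨rfl, fun c hc => ?_⟩
      rw [Set.mem_singleton_iff.1 hc]
    simpa using hasFDerivAt_distsq (C := ({y} : Set X)) (PC := fun _ => y)
      ⟨y, rfl⟩ (convex_singleton y) hPCy x
  -- dist part composed with G
  have hdist : HasFDerivAt (fun z : X => ‖G z - PC (G z)‖ ^ 2)
      (((2:ℝ) • (innerSL ℝ (G x - PC (G x)))).comp (fderiv ℝ G x)) x :=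
    (hasFDerivAt_distsq hCne hCconv hPC (G x)).comp x hGd
  have hq : HasFDerivAt (fun z => qpen f G PC τ z y)
      (fderiv ℝ f x + (τ/2) • ((2:ℝ) • (innerSL ℝ (x - y))) +
        (τ/2) • (((2:ℝ) • (innerSL ℝ (G x - PC (G x)))).comp (fderiv ℝ G x))) x := by
    have := hfd.add (((hsq.add hdist).const_mul (τ/2)))
    refine this.congr_fderiv ?_
    ext h
    simp only [ContinuousLinearMap.add_apply, ContinuousLinearMap.coe_smul', Pi.smul_apply,
      smul_eq_mul]
    ring
  rw [hasGradientAt_iff_hasFDerivAt]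
  refine hq.congr_fderiv ?_
  ext h
  rw [InnerProductSpace.toDual_apply_apply]
  simp only [gmap, inner_add_left, inner_smul_left, RCLike.ofReal_real_eq_id, id_eq,
    ContinuousLinearMap.add_apply, ContinuousLinearMap.coe_smul', Pi.smul_apply,
    ContinuousLinearMap.coe_comp', Function.comp_apply, innerSL_apply_apply, smul_eq_mul,
    ContinuousLinearMap.adjoint_inner_left, conj_trivial]
  have hgrad : ⟪gradient f x, h⟫ = (fderiv ℝ f x) h := by
    rw [gradient]
    have := InnerProductSpace.toDual_apply_apply (𝕜 := ℝ) (E := X)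
      (x := (InnerProductSpace.toDual ℝ X).symm (fderiv ℝ f x)) (y := h)
    rw [LinearIsometryEquiv.apply_symm_apply] at this
    exact this.symm
  rw [hgrad]
  ring

lemma continuous_gmap {f : X → ℝ} {G : X → Y} {C : Set Y} {PC : Y → Y}
    (hf : ContDiff ℝ 1 f) (hG : ContDiff ℝ 1 G)
    (hCne : C.Nonempty) (hCconv : Convex ℝ C)
    (hPC : ∀ w, PC w ∈ C ∧ ∀ c ∈ C, ‖PC w - w‖ ≤ ‖c - w‖) (τ : ℝ) :
    Continuous (fun p : X × X => gmap f G PC τ p.1 p.2) := by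
  have hPCcont : Continuous PC := by
    have : LipschitzWith 1 PC := by
      apply LipschitzWith.of_dist_le_mul
      intro a b
      rw [dist_eq_norm, dist_eq_norm]
      simpa using proj_nonexp hCne hCconv hPC a b
    exact this.continuous
  have hgradf : Continuous (fun x : X => gradient f x) := by
    have h1 : Continuous (fun x : X => fderiv ℝ f x) := (hf.continuous_fderiv one_ne_zero)
    exact (InnerProductSpace.toDual ℝ X).symm.continuous.comp h1
  have hfdG : Continuous (fun x : X => fderiv ℝ G x) := (hG.continuous_fderiv one_ne_zero)
  have hadj : Continuous (fun x : X => (fderiv ℝ G x).adjoint) :=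
    (ContinuousLinearMap.adjoint (E := X) (F := Y)).continuous.comp hfdG
  have hvec : Continuous (fun x : X => G x - PC (G x)) :=
    (hG.continuous).sub (hPCcont.comp hG.continuous)
  have happ : Continuous (fun x : X => (fderiv ℝ G x).adjoint (G x - PC (G x))) := by
    have : Continuous (fun p : (Y →L[ℝ] X) × Y => p.1 p.2) :=
      isBoundedBilinearMap_apply.continuous
    exact this.comp (hadj.prodMk hvec)
  unfold gmap
  apply Continuous.add
  apply Continuous.add
  · exact hgradf.comp continuous_fst
  · exact (continuous_const.smul ((continuous_fst).sub continuous_snd))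
  · exact continuous_const.smul (happ.comp continuous_fst)

lemma hasDerivAt_qpen_line {f : X → ℝ} {G : X → Y} {C : Set Y} {PC : Y → Y}
    (hf : ContDiff ℝ 1 f) (hG : ContDiff ℝ 1 G)
    (hCne : C.Nonempty) (hCconv : Convex ℝ C)
    (hPC : ∀ w, PC w ∈ C ∧ ∀ c ∈ C, ‖PC w - w‖ ≤ ‖c - w‖) (τ : ℝ) (u v dd : X) (t : ℝ) :
    HasDerivAt (fun s : ℝ => qpen f G PC τ (u + s • dd) v)
      ⟪gmap f G PC τ (u + t • dd) v, dd⟫ t := by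
  have hline : HasDerivAt (fun s : ℝ => u + s • dd) dd t := by
    simpa using ((hasDerivAt_id t).smul_const dd).const_add u
  have hq := hasGradientAt_qpen hf hG hCne hCconv hPC τ (u + t • dd) v
  rw [hasGradientAt_iff_hasFDerivAt] at hq
  have := HasFDerivAt.comp_hasDerivAt t hq hline
  simpa [InnerProductSpace.toDual_apply_apply, Function.comp_def] using this

lemma qpen_slope {f : X → ℝ} {G : X → Y} {C : Set Y} {PC : Y → Y}
    (hf : ContDiff ℝ 1 f) (hG : ContDiff ℝ 1 G)
    (hCne : C.Nonempty) (hCconv : Convex ℝ C)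
    (hPC : ∀ w, PC w ∈ C ∧ ∀ c ∈ C, ‖PC w - w‖ ≤ ‖c - w‖) (τ : ℝ) (u v dd : X)
    {s : ℝ} (hs : 0 < s) :
    ∃ t ∈ Set.Ioo 0 s, qpen f G PC τ (u + s • dd) v =
      qpen f G PC τ u v + s * ⟪gmap f G PC τ (u + t • dd) v, dd⟫ := by
  have hderiv : ∀ t : ℝ, HasDerivAt (fun r : ℝ => qpen f G PC τ (u + r • dd) v)
      ⟪gmap f G PC τ (u + t • dd) v, dd⟫ t :=
    fun t => hasDerivAt_qpen_line hf hG hCne hCconv hPC τ u v dd t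
  obtain ⟨t, ht, heq⟩ := exists_hasDerivAt_eq_slope
    (fun r : ℝ => qpen f G PC τ (u + r • dd) v)
    (fun t => ⟪gmap f G PC τ (u + t • dd) v, dd⟫) hs
    (fun t _ => (hderiv t).continuousAt.continuousWithinAt)
    (fun t _ => hderiv t)
  refine ⟨t, ht, ?_⟩
  have h0 : qpen f G PC τ (u + (0:ℝ) • dd) v = qpen f G PC τ u v := by norm_num
  rw [heq, sub_zero, h0]
  field_simp
  ring

lemma op_norm_bound {c₂ : ℝ} (hc₂ : 0 < c₂) (Hop : X →L[ℝ] X)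
    (hself : ∀ z w : X, ⟪Hop z, w⟫ = ⟪z, Hop w⟫)
    (hpos : ∀ z : X, 0 ≤ ⟪z, Hop z⟫)
    (hub : ∀ z : X, ⟪z, Hop z⟫ ≤ c₂ * ‖z‖ ^ 2) (z : X) :
    ‖Hop z‖ ≤ c₂ * ‖z‖ := by
  set w := Hop z with hw
  have key : (2 * ⟪z, Hop w⟫) ^ 2 - 4 * (⟪w, Hop w⟫ * ⟪z, Hop z⟫) ≤ 0 := by
    have hq : ∀ t : ℝ, 0 ≤ ⟪w, Hop w⟫ * (t * t) + (2 * ⟪z, Hop w⟫) * t + ⟪z, Hop z⟫ := by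
      intro t
      have := hpos (z + t • w)
      have expand : ⟪z + t • w, Hop (z + t • w)⟫ =
          ⟪w, Hop w⟫ * (t * t) + (2 * ⟪z, Hop w⟫) * t + ⟪z, Hop z⟫ := by
        rw [map_add, map_smul]
        simp only [inner_add_left, inner_add_right, inner_smul_left, inner_smul_right,
          conj_trivial, smul_eq_mul]
        have : ⟪w, Hop z⟫ = ⟪z, Hop w⟫ := by
          rw [real_inner_comm, hself]
        rw [this]; ring
      linarith [expand ▸ this]
    have := discrim_le_zero hq
    rw [discrim] at this
    linarith
  have hzw : ⟪z, Hop w⟫ = ‖w‖ ^ 2 := by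
    rw [← hself, ← hw, real_inner_self_eq_norm_sq]
  rw [hzw] at key
  have h1 : ⟪w, Hop w⟫ ≤ c₂ * ‖w‖ ^ 2 := hub w
  have h2 : ⟪z, Hop z⟫ ≤ c₂ * ‖z‖ ^ 2 := hub z
  have hww : 0 ≤ ⟪w, Hop w⟫ := hpos w
  have hzz : 0 ≤ ⟪z, Hop z⟫ := hpos z
  rcases eq_or_lt_of_le (norm_nonneg w) with h | h
  · rw [← h]; positivity
  · have h4 : ‖w‖ ^ 4 ≤ c₂ ^ 2 * ‖z‖ ^ 2 * ‖w‖ ^ 2 := by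
      nlinarith [mul_le_mul h1 h2 hzz (by positivity : (0:ℝ) ≤ c₂ * ‖w‖^2)]
    have h5 : ‖w‖ ^ 2 ≤ (c₂ * ‖z‖) ^ 2 := by
      have hw2 : 0 < ‖w‖ ^ 2 := by positivity
      nlinarith
    exact (abs_le_of_sq_le_sq' h5 (by positivity)).2

end helpers

set_option maxHeartbeats 1600000 in
/-- the inexact alternating minimization method cannot cycle infinitely:
running the iteration indefinitely, some iterate satisfies the stopping criterion
`‖∇_x q_τ(u^ℓ, v^ℓ)‖ ≤ δ`, and it moreover minimizes `q_τ(u^ℓ, ·)` over `D`. -/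
theorem alternating_minimization_terminates
    (f : X → ℝ) (G : X → Y) (C : Set Y) (D : Set X)
    (hf : ContDiff ℝ 1 f) (hG : ContDiff ℝ 1 G)
    (hCne : C.Nonempty) (hCcl : IsClosed C) (hCconv : Convex ℝ C)
    (hDne : D.Nonempty) (hDcl : IsClosed D)
    (PC : Y → Y) (hPC : ∀ w, PC w ∈ C ∧ ∀ c ∈ C, ‖PC w - w‖ ≤ ‖c - w‖)
    (hlev : ∀ η : ℝ, Bornology.IsBounded {x : X | f x ≤ η})
    (τ δ γ β : ℝ) (hτ : 0 < τ) (hδ : 0 < δ) (hγ : 0 < γ ∧ γ < 1) (hβ : 0 < β ∧ β < 1)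
    (c₁ c₂ : ℝ) (hc₁ : 0 < c₁) (hc₂ : 0 < c₂)
    (u v d : ℕ → X) (H : ℕ → X →L[ℝ] X) (α : ℕ → ℝ)
    (hv0 : v 0 ∈ D)
    (hself : ∀ ℓ, ∀ z w : X, ⟪(H ℓ) z, w⟫ = ⟪z, (H ℓ) w⟫)
    (heig : ∀ ℓ, ∀ z : X, c₁ * ‖z‖ ^ 2 ≤ ⟪z, (H ℓ) z⟫ ∧ ⟪z, (H ℓ) z⟫ ≤ c₂ * ‖z‖ ^ 2)
    (hd : ∀ ℓ, d ℓ = -(H ℓ) (gradqx f G PC τ (u ℓ) (v ℓ)))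
    (hα : ∀ ℓ, (∃ j : ℕ, α ℓ = β ^ j ∧
        armijoCond f G PC τ γ (u ℓ) (v ℓ) (d ℓ) (β ^ j)) ∧
      ∀ j : ℕ, armijoCond f G PC τ γ (u ℓ) (v ℓ) (d ℓ) (β ^ j) → β ^ j ≤ α ℓ)
    (hu : ∀ ℓ, u (ℓ + 1) = u ℓ + α ℓ • d ℓ)
    (hv : ∀ ℓ, v (ℓ + 1) ∈ projSet D (u (ℓ + 1))) :
    ∃ ℓ : ℕ, ‖gradqx f G PC τ (u ℓ) (v ℓ)‖ ≤ δ ∧ v ℓ ∈ D ∧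
      ∀ yy ∈ D, qpen f G PC τ (u ℓ) (v ℓ) ≤ qpen f G PC τ (u ℓ) yy := by
  classical
  by_contra hcon
  -- abbreviations
  set gg : ℕ → X := fun ℓ => gradqx f G PC τ (u ℓ) (v ℓ) with hgg
  set qq : ℕ → ℝ := fun ℓ => qpen f G PC τ (u ℓ) (v ℓ) with hqq
  have hgq : ∀ x y : X, gradqx f G PC τ x y = gmap f G PC τ x y := fun x y =>
    (hasGradientAt_qpen hf hG hCne hCconv hPC τ x y).gradient
  -- all v ℓ are in D
  have hDv : ∀ ℓ, v ℓ ∈ D := by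
    intro ℓ
    cases ℓ with
    | zero => exact hv0
    | succ m => exact (hv m).1
  -- the later iterates minimize qpen over D
  have hmin : ∀ ℓ, ∀ yy ∈ D, qpen f G PC τ (u (ℓ+1)) (v (ℓ+1)) ≤ qpen f G PC τ (u (ℓ+1)) yy := by
    intro ℓ yy hyy
    have h1 : ‖v (ℓ+1) - u (ℓ+1)‖ ≤ ‖yy - u (ℓ+1)‖ := (hv ℓ).2 yy hyy
    have h2 : ‖u (ℓ+1) - v (ℓ+1)‖ ≤ ‖u (ℓ+1) - yy‖ := by
      rw [norm_sub_rev, norm_sub_rev (u (ℓ+1)) yy]; exact h1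
    unfold qpen
    have h3 : ‖u (ℓ+1) - v (ℓ+1)‖ ^ 2 ≤ ‖u (ℓ+1) - yy‖ ^ 2 :=
      pow_le_pow_left₀ (norm_nonneg _) h2 2
    nlinarith [hτ.le]
  -- gradients of later iterates are big
  have hbig : ∀ ℓ, δ < ‖gg (ℓ+1)‖ := by
    intro ℓ
    by_contra hle
    rw [not_lt] at hle
    exact hcon ⟨ℓ+1, hle, hDv (ℓ+1), hmin ℓ⟩
  -- basic facts about the step sizes
  have hαpos : ∀ ℓ, 0 < α ℓ := by
    intro ℓ
    obtain ⟨j, hj, -⟩ := (hα ℓ).1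
    rw [hj]; exact pow_pos hβ.1 j
  -- inner products with the direction
  have hgd_le : ∀ ℓ, ⟪gg ℓ, d ℓ⟫ ≤ -(c₁ * ‖gg ℓ‖ ^ 2) := by
    intro ℓ
    rw [hd ℓ]
    rw [inner_neg_right]
    have := (heig ℓ (gg ℓ)).1
    linarith
  -- Armijo inequality at the accepted step
  have harm : ∀ ℓ, qpen f G PC τ (u (ℓ+1)) (v ℓ) ≤ qq ℓ + γ * α ℓ * ⟪gg ℓ, d ℓ⟫ := by
    intro ℓ
    obtain ⟨j, hj, hcnd⟩ := (hα ℓ).1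
    unfold armijoCond at hcnd
    rw [hu ℓ, hj]
    exact hcnd
  -- monotone decrease of qq
  have hstep : ∀ ℓ, qq (ℓ+1) ≤ qq ℓ + γ * α ℓ * ⟪gg ℓ, d ℓ⟫ := by
    intro ℓ
    calc qq (ℓ+1) ≤ qpen f G PC τ (u (ℓ+1)) (v ℓ) := hmin ℓ (v ℓ) (hDv ℓ)
    _ ≤ qq ℓ + γ * α ℓ * ⟪gg ℓ, d ℓ⟫ := harm ℓ
  have hqmono : ∀ ℓ, qq (ℓ+1) ≤ qq ℓ := by
    intro ℓ
    have h1 := hstep ℓ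
    have h2 := hgd_le ℓ
    have h3 := hαpos ℓ
    have hgd0 : ⟪gg ℓ, d ℓ⟫ ≤ 0 := by nlinarith [sq_nonneg ‖gg ℓ‖]
    have h4 : γ * α ℓ * ⟪gg ℓ, d ℓ⟫ ≤ 0 :=
      mul_nonpos_of_nonneg_of_nonpos (mul_nonneg hγ.1.le h3.le) hgd0
    linarith
  have hq0 : ∀ ℓ, qq ℓ ≤ qq 0 := by
    intro ℓ
    induction ℓ with
    | zero => exact le_refl _
    | succ m ih => exact (hqmono m).trans ih
  -- f is bounded along iterates, hence iterates stay in a ball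
  have hfq : ∀ ℓ, f (u ℓ) ≤ qq ℓ := by
    intro ℓ
    have : (0:ℝ) ≤ τ / 2 * (‖u ℓ - v ℓ‖ ^ 2 + ‖G (u ℓ) - PC (G (u ℓ))‖ ^ 2) := by positivity
    unfold qq; unfold qpen; linarith
  obtain ⟨R₀, hR₀⟩ := (hlev (qq 0)).subset_closedBall 0
  set R : ℝ := max R₀ 0 with hRdef
  have hRnn : 0 ≤ R := le_max_right _ _
  have huball : ∀ ℓ, ‖u ℓ‖ ≤ R := by
    intro ℓ
    have : u ℓ ∈ Metric.closedBall (0:X) R₀ := hR₀ (by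
      simp only [Set.mem_setOf_eq]
      exact (hfq ℓ).trans (hq0 ℓ))
    rw [Metric.mem_closedBall, dist_zero_right] at this
    exact this.trans (le_max_left _ _)
  set Rv : ℝ := 2 * R + ‖v 0‖ with hRvdef
  have hvball : ∀ ℓ, ‖v ℓ‖ ≤ Rv := by
    intro ℓ
    cases ℓ with
    | zero =>
      have : (0:ℝ) ≤ 2 * R := by linarith
      simp only [hRvdef]; linarith
    | succ m =>
      have h1 : ‖v (m+1) - u (m+1)‖ ≤ ‖v 0 - u (m+1)‖ := (hv m).2 (v 0) hv0
      have h2 : ‖v 0 - u (m+1)‖ ≤ ‖v 0‖ + ‖u (m+1)‖ := norm_sub_le _ _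
      have h3 : ‖v (m+1)‖ ≤ ‖v (m+1) - u (m+1)‖ + ‖u (m+1)‖ := by
        have := norm_add_le (v (m+1) - u (m+1)) (u (m+1))
        simpa using this
      have h4 := huball (m+1)
      simp only [hRvdef]; linarith
  have huRv : ∀ ℓ, ‖u ℓ‖ ≤ Rv := by
    intro ℓ
    have := huball ℓ
    have : ‖u ℓ‖ ≤ R := this
    have hv0n : (0:ℝ) ≤ ‖v 0‖ := norm_nonneg _
    simp only [hRvdef]; linarith
  -- bound on gradients over the relevant compact set
  set K1 : Set (X × X) := Metric.closedBall 0 Rv ×ˢ Metric.closedBall 0 Rv with hK1def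
  have hK1comp : IsCompact K1 :=
    (isCompact_closedBall _ _).prod (isCompact_closedBall _ _)
  have hK1ne : K1.Nonempty := by
    have h0 : (0:X) ∈ Metric.closedBall (0:X) Rv := by
      simp only [Metric.mem_closedBall, dist_self, hRvdef]
      linarith [hRnn, norm_nonneg (v 0)]
    exact ⟨(0,0), h0, h0⟩
  have hgmcont : Continuous (fun p : X × X => gmap f G PC τ p.1 p.2) :=
    continuous_gmap hf hG hCne hCconv hPC τ
  obtain ⟨pmax, hpmax, hM'⟩ := hK1comp.exists_isMaxOn hK1ne
    (continuous_norm.comp hgmcont).continuousOn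
  have hM := isMaxOn_iff.1 hM'
  set M : ℝ := ‖gmap f G PC τ pmax.1 pmax.2‖ + 1 with hMdef
  have hMpos : 0 < M := by positivity
  have hgM : ∀ ℓ, ‖gg ℓ‖ ≤ M := by
    intro ℓ
    have hmem : ((u ℓ, v ℓ) : X × X) ∈ K1 := by
      constructor
      · rw [Metric.mem_closedBall, dist_zero_right]; exact huRv ℓ
      · rw [Metric.mem_closedBall, dist_zero_right]; exact hvball ℓ
    have := hM (u ℓ, v ℓ) hmem
    simp only [hgg, hgq]
    simp only [Function.comp_apply] at this
    linarith
  -- bound on directions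
  have hdM : ∀ ℓ, ‖d ℓ‖ ≤ c₂ * M := by
    intro ℓ
    rw [hd ℓ, norm_neg]
    have hb := op_norm_bound hc₂ (H ℓ) (hself ℓ)
      (fun z => le_trans (by positivity) (heig ℓ z).1)
      (fun z => (heig ℓ z).2) (gg ℓ)
    calc ‖(H ℓ) (gg ℓ)‖ ≤ c₂ * ‖gg ℓ‖ := hb
    _ ≤ c₂ * M := by nlinarith [hgM ℓ]
  -- uniform continuity of the gradient on a bigger compact set
  set R2 : ℝ := Rv + c₂ * M + 1 with hR2def
  have hRvnn : 0 ≤ Rv := le_trans (norm_nonneg (v 0)) (by simp only [hRvdef]; linarith)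
  have hR2pos : 0 < R2 := by
    have := mul_pos hc₂ hMpos
    simp only [hR2def]; linarith [hRvnn]
  set K2 : Set (X × X) := Metric.closedBall 0 R2 ×ˢ Metric.closedBall 0 R2 with hK2def
  have hK2comp : IsCompact K2 :=
    (isCompact_closedBall _ _).prod (isCompact_closedBall _ _)
  have hunif : UniformContinuousOn (fun p : X × X => gmap f G PC τ p.1 p.2) K2 :=
    hK2comp.uniformContinuousOn_of_continuous hgmcont.continuousOn
  set ε : ℝ := (1 - γ) * c₁ * δ / c₂ with hεdef
  have hεpos : 0 < ε := by
    have h1γ : 0 < 1 - γ := by linarith [hγ.2]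
    exact div_pos (mul_pos (mul_pos h1γ hc₁) hδ) hc₂
  rw [Metric.uniformContinuousOn_iff] at hunif
  obtain ⟨ρ, hρpos, hρ⟩ := hunif ε hεpos
  -- all small steps satisfy the Armijo condition
  set abar : ℝ := min 1 (ρ / (c₂ * M + 1)) with habar
  have habarpos : 0 < abar :=
    lt_min one_pos (div_pos hρpos (by nlinarith [mul_pos hc₂ hMpos]))
  have hsmall : ∀ (ℓ : ℕ) (s : ℝ), ∀ _ : 0 < s, ∀ _ : s ≤ abar, δ < ‖gg ℓ‖ →
      armijoCond f G PC τ γ (u ℓ) (v ℓ) (d ℓ) s := by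
    intro ℓ s hs hsle hgbig
    obtain ⟨t, ht, heq⟩ := qpen_slope hf hG hCne hCconv hPC τ (u ℓ) (v ℓ) (d ℓ) hs
    unfold armijoCond
    rw [heq]
    have hs1 : s ≤ 1 := hsle.trans (min_le_left _ _)
    have hsρ : s ≤ ρ / (c₂ * M + 1) := hsle.trans (min_le_right _ _)
    -- the point u ℓ + t • d ℓ stays in K2 and close to u ℓ
    have htd : ‖t • d ℓ‖ < ρ := by
      rw [norm_smul, Real.norm_eq_abs, abs_of_pos ht.1]
      have h1 : t * ‖d ℓ‖ ≤ s * ‖d ℓ‖ := by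
        apply mul_le_mul_of_nonneg_right ht.2.le (norm_nonneg _)
      have h2 : s * ‖d ℓ‖ ≤ s * (c₂ * M) := by
        apply mul_le_mul_of_nonneg_left (hdM ℓ) hs.le
      have h3 : s * (c₂ * M) < ρ := by
        have := (le_div_iff₀ (by nlinarith [mul_pos hc₂ hMpos] : (0:ℝ) < c₂ * M + 1)).1 hsρ
        nlinarith [hMpos, hc₂, hs]
      linarith
    have hmem1 : ((u ℓ + t • d ℓ, v ℓ) : X × X) ∈ K2 := by
      constructor
      · rw [Metric.mem_closedBall, dist_zero_right]
        have h1 : ‖u ℓ + t • d ℓ‖ ≤ ‖u ℓ‖ + ‖t • d ℓ‖ := norm_add_le _ _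
        have h2 : ‖t • d ℓ‖ ≤ c₂ * M := by
          rw [norm_smul, Real.norm_eq_abs, abs_of_pos ht.1]
          have : t ≤ 1 := le_trans ht.2.le hs1
          nlinarith [hdM ℓ, norm_nonneg (d ℓ), hMpos, hc₂]
        have h3 := huRv ℓ
        simp only [hR2def]; linarith
      · rw [Metric.mem_closedBall, dist_zero_right]
        have := hvball ℓ
        simp only [hR2def]
        nlinarith [hMpos, hc₂]
    have hmem2 : ((u ℓ, v ℓ) : X × X) ∈ K2 := by
      constructor
      · rw [Metric.mem_closedBall, dist_zero_right]
        have h3 := huRv ℓ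
        simp only [hR2def]; nlinarith [hMpos, hc₂]
      · rw [Metric.mem_closedBall, dist_zero_right]
        have := hvball ℓ
        simp only [hR2def]; nlinarith [hMpos, hc₂]
    have hdist : dist ((u ℓ + t • d ℓ, v ℓ) : X × X) ((u ℓ, v ℓ) : X × X) < ρ := by
      rw [Prod.dist_eq]
      simp only [dist_self]
      rw [dist_eq_norm]
      have : u ℓ + t • d ℓ - u ℓ = t • d ℓ := by abel
      rw [this]
      exact max_lt htd hρpos
    have hclose := hρ _ hmem1 _ hmem2 hdist
    rw [dist_eq_norm] at hclose
    -- estimate the slope term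
    have hib : ⟪gmap f G PC τ (u ℓ + t • d ℓ) (v ℓ), d ℓ⟫ ≤ ⟪gg ℓ, d ℓ⟫ + ε * ‖d ℓ‖ := by
      have hsplit : ⟪gmap f G PC τ (u ℓ + t • d ℓ) (v ℓ), d ℓ⟫ = ⟪gg ℓ, d ℓ⟫ +
          ⟪gmap f G PC τ (u ℓ + t • d ℓ) (v ℓ) - gmap f G PC τ (u ℓ) (v ℓ), d ℓ⟫ := by
        rw [inner_sub_left]
        simp only [hgg, hgq]
        ring
      rw [hsplit]
      have hcs := real_inner_le_norm
        (gmap f G PC τ (u ℓ + t • d ℓ) (v ℓ) - gmap f G PC τ (u ℓ) (v ℓ)) (d ℓ)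
      have : ‖gmap f G PC τ (u ℓ + t • d ℓ) (v ℓ) - gmap f G PC τ (u ℓ) (v ℓ)‖ * ‖d ℓ‖
          ≤ ε * ‖d ℓ‖ := by
        apply mul_le_mul_of_nonneg_right hclose.le (norm_nonneg _)
      linarith
    -- the key inequality : ε * ‖d ℓ‖ ≤ -(1-γ) * ⟪gg ℓ, d ℓ⟫
    have hkey : ε * ‖d ℓ‖ ≤ (1 - γ) * (c₁ * ‖gg ℓ‖ ^ 2) := by
      have h1 : ‖d ℓ‖ ≤ c₂ * ‖gg ℓ‖ := by
        rw [hd ℓ, norm_neg]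
        exact op_norm_bound hc₂ (H ℓ) (hself ℓ)
          (fun z => le_trans (by positivity) (heig ℓ z).1)
          (fun z => (heig ℓ z).2) (gg ℓ)
      have h2 : δ * ‖d ℓ‖ ≤ δ * (c₂ * ‖gg ℓ‖) := by
        apply mul_le_mul_of_nonneg_left h1 hδ.le
      have h3 : δ * ‖gg ℓ‖ ≤ ‖gg ℓ‖ * ‖gg ℓ‖ := by
        nlinarith [hgbig, norm_nonneg (gg ℓ)]
      have h1γ : 0 < 1 - γ := by linarith [hγ.2]
      simp only [hεdef]
      rw [div_mul_eq_mul_div, div_le_iff₀ hc₂]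
      have e1 : (1-γ)*c₁*(δ*‖d ℓ‖) ≤ (1-γ)*c₁*(δ*(c₂*‖gg ℓ‖)) := by
        apply mul_le_mul_of_nonneg_left _ (by nlinarith : (0:ℝ) ≤ (1-γ)*c₁)
        linarith [h2]
      have e2 : ((1-γ)*c₁*c₂)*(δ*‖gg ℓ‖) ≤ ((1-γ)*c₁*c₂)*(‖gg ℓ‖*‖gg ℓ‖) := by
        apply mul_le_mul_of_nonneg_left h3
        nlinarith [mul_pos (mul_pos h1γ hc₁) hc₂]
      nlinarith [e1, e2, sq_nonneg ‖gg ℓ‖]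
    have hgd := hgd_le ℓ
    have hggl : gradqx f G PC τ (u ℓ) (v ℓ) = gg ℓ := rfl
    rw [hggl]
    have h1γ : (0:ℝ) < 1 - γ := by linarith [hγ.2]
    have m1 : s * ⟪gmap f G PC τ (u ℓ + t • d ℓ) (v ℓ), d ℓ⟫ ≤
        s * (⟪gg ℓ, d ℓ⟫ + ε * ‖d ℓ‖) := mul_le_mul_of_nonneg_left hib hs.le
    have m2 : s * (ε * ‖d ℓ‖) ≤ s * ((1-γ) * (c₁ * ‖gg ℓ‖ ^ 2)) :=
      mul_le_mul_of_nonneg_left hkey hs.le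
    have m3 : (s * (1-γ)) * (c₁ * ‖gg ℓ‖ ^ 2) ≤ (s * (1-γ)) * (-⟪gg ℓ, d ℓ⟫) := by
      apply mul_le_mul_of_nonneg_left (by linarith [hgd]) (by positivity)
    nlinarith [m1, m2, m3]
  -- a uniform positive lower bound for all step sizes from iteration 1 on
  obtain ⟨j₀, hj₀⟩ := exists_pow_lt_of_lt_one habarpos hβ.2
  have hαlb : ∀ m, β ^ j₀ ≤ α (m + 1) := by
    intro m
    apply (hα (m+1)).2
    exact hsmall (m+1) (β ^ j₀) (pow_pos hβ.1 j₀) hj₀.le (hbig m)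
  -- uniform decrease from iteration 1 on
  set Δ : ℝ := γ * β ^ j₀ * (c₁ * δ ^ 2) with hΔdef
  have hΔpos : 0 < Δ :=
    mul_pos (mul_pos hγ.1 (pow_pos hβ.1 j₀)) (mul_pos hc₁ (pow_pos hδ 2))
  have hdec : ∀ m, qq (m + 2) ≤ qq (m + 1) - Δ := by
    intro m
    have h1 := hstep (m+1)
    have h2 := hgd_le (m+1)
    have h3 := hbig m
    have h4 := hαlb m
    have h5 := hαpos (m+1)
    have hβj : 0 < β ^ j₀ := pow_pos hβ.1 j₀
    have hnn : 0 ≤ ‖gg (m+1)‖ := norm_nonneg _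
    have hgsq : δ ^ 2 ≤ ‖gg (m+1)‖ ^ 2 := by nlinarith
    have hineq : γ * α (m+1) * ⟪gg (m+1), d (m+1)⟫ ≤ -Δ := by
      have ha : γ * α (m+1) * ⟪gg (m+1), d (m+1)⟫ ≤ γ * α (m+1) * (-(c₁ * ‖gg (m+1)‖ ^ 2)) := by
        apply mul_le_mul_of_nonneg_left h2
        exact mul_nonneg hγ.1.le h5.le
      have hb : γ * α (m+1) * (-(c₁ * ‖gg (m+1)‖ ^ 2)) ≤ -Δ := by
        simp only [hΔdef]
        have hc : c₁ * δ ^ 2 ≤ c₁ * ‖gg (m+1)‖ ^ 2 := by nlinarith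
        have hd2 : β ^ j₀ * (c₁ * δ ^ 2) ≤ α (m+1) * (c₁ * ‖gg (m+1)‖ ^ 2) := by
          apply mul_le_mul h4 hc (mul_nonneg hc₁.le (sq_nonneg δ)) h5.le
        nlinarith [hγ.1]
      linarith
    linarith
  -- iterate the decrease
  have hiter : ∀ n : ℕ, qq (n + 1) ≤ qq 1 - n * Δ := by
    intro n
    induction n with
    | zero => simp
    | succ m ih =>
      have := hdec m
      push_cast
      have : qq (m + 2) ≤ qq 1 - m * Δ - Δ := by linarith
      calc qq (m + 1 + 1) = qq (m + 2) := rfl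
      _ ≤ qq 1 - m * Δ - Δ := this
      _ = qq 1 - (m + 1) * Δ := by push_cast; ring
  -- lower bound for qq
  obtain ⟨xmin, hxmin, hfmin'⟩ := (isCompact_closedBall (0:X) R).exists_isMinOn
    (Metric.nonempty_closedBall.2 hRnn) (hf.continuous).continuousOn
  have hfmin := isMinOn_iff.1 hfmin'
  have hqlb : ∀ n, f xmin ≤ qq n := by
    intro n
    have h1 : u n ∈ Metric.closedBall (0:X) R := by
      rw [Metric.mem_closedBall, dist_zero_right]; exact huball n
    exact (hfmin (u n) h1).trans (hfq n)
  -- contradiction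
  obtain ⟨n, hn⟩ := exists_nat_gt ((qq 1 - f xmin) / Δ)
  have h1 := hiter n
  have h2 := hqlb (n + 1)
  have h3 : (qq 1 - f xmin) < n * Δ := by
    rw [div_lt_iff₀ hΔpos] at hn
    linarith
  linarith
end
end
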